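/- For every natural number k ≥ 0 and real q ∈ (0,1], the sum over t from 0 to k of C(k,t) * q^t * (1-q)^(k-t) / (t+2) equals ((k+2)*q - 1 + (1-q)^(k+2)) / ((k+1)*(k+2)*q^2). -/
import Mathlib

open Finset

private lemma binom_sum (n : ℕ) (q : ℝ) :
    ∑ s ∈ range (n+1), (n.choose s : ℝ) * q ^ s * (1 - q) ^ (n - s) = 1 := by
  have h : (q + (1 - q)) ^ n = 1 := by norm_num
  conv_rhs => rw [← h, add_pow]
  exact Finset.sum_congr rfl (fun s _ => by ring)

private lemma mean_sum (n : ℕ) (q : ℝ) :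
    ∑ s ∈ range (n+1), (s : ℝ) * (n.choose s : ℝ) * q ^ s * (1 - q) ^ (n - s)
      = n * q := by
  cases n with
  | zero => simp
  | succ m =>
    rw [Finset.sum_range_succ']
    simp only [Nat.cast_zero, zero_mul, add_zero]
    have step : ∀ t ∈ range (m+1),
        ((t+1 : ℕ) : ℝ) * ((m+1).choose (t+1) : ℝ) * q ^ (t+1) * (1 - q) ^ (m+1-(t+1))
          = ((m+1 : ℝ) * q) * ((m.choose t : ℝ) * q ^ t * (1 - q) ^ (m - t)) := by
      intro t _
      have hnat : (t+1) * ((m+1).choose (t+1)) = (m+1) * m.choose t := by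
        rw [mul_comm (t+1), ← Nat.add_one_mul_choose_eq]
      have hc : ((t:ℝ)+1) * ((m+1).choose (t+1) : ℝ) = ((m:ℝ)+1) * (m.choose t : ℝ) := by
        exact_mod_cast hnat
      rw [Nat.succ_sub_succ]
      push_cast
      linear_combination (q ^ (t+1) * (1 - q) ^ (m - t)) * hc
    rw [Finset.sum_congr rfl step, ← Finset.mul_sum, binom_sum]
    push_cast
    ring

theorem stmt_8 (k : ℕ) (q : ℝ) (hq0 : 0 < q) (hq1 : q ≤ 1) :
    ∑ t ∈ Finset.range (k + 1), (k.choose t : ℝ) * q ^ t * (1 - q) ^ (k - t) / (t + 2)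
      = ((k + 2) * q - 1 + (1 - q) ^ (k + 2)) / ((k + 1) * (k + 2) * q ^ 2) := by
  have hq : q ≠ 0 := ne_of_gt hq0
  have hkey : ∀ t : ℕ, (t+1) * (t+2) * ((k+2).choose (t+2)) = (k+1) * (k+2) * k.choose t := by
    intro t
    have h1 : (t+2) * ((k+2).choose (t+2)) = (k+2) * ((k+1).choose (t+1)) := by
      rw [mul_comm (t+2), ← Nat.add_one_mul_choose_eq]
    have h2 : (t+1) * ((k+1).choose (t+1)) = (k+1) * k.choose t := by
      rw [mul_comm (t+1), ← Nat.add_one_mul_choose_eq]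
    calc (t+1) * (t+2) * ((k+2).choose (t+2)) = (t+1) * ((t+2) * ((k+2).choose (t+2))) := by ring
      _ = (t+1) * ((k+2) * ((k+1).choose (t+1))) := by rw [h1]
      _ = (k+2) * ((t+1) * ((k+1).choose (t+1))) := by ring
      _ = (k+2) * ((k+1) * k.choose t) := by rw [h2]
      _ = (k+1) * (k+2) * k.choose t := by ring
  -- the main auxiliary sum
  have hS : ∑ t ∈ range (k+1),
      (((t:ℝ)+2) - 1) * (((k+2).choose (t+2) : ℝ)) * q ^ (t+2) * (1 - q) ^ (k+2-(t+2))
        = ((k:ℝ)+2) * q - 1 + (1 - q) ^ (k+2) := by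
    have hfull : ∑ s ∈ range (k+3),
        (((s:ℝ)) - 1) * (((k+2).choose s : ℝ)) * q ^ s * (1 - q) ^ (k+2-s)
          = ((k:ℝ)+2) * q - 1 := by
      have expand : ∀ s ∈ range (k+3),
          (((s:ℝ)) - 1) * (((k+2).choose s : ℝ)) * q ^ s * (1 - q) ^ (k+2-s)
            = (s : ℝ) * ((k+2).choose s : ℝ) * q ^ s * (1 - q) ^ (k+2-s)
              - ((k+2).choose s : ℝ) * q ^ s * (1 - q) ^ (k+2-s) := by
        intro s _; ring
      rw [Finset.sum_congr rfl expand, Finset.sum_sub_distrib]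
      have h1 := mean_sum (k+2) q
      have h2 := binom_sum (k+2) q
      push_cast at h1 h2 ⊢
      rw [h1, h2]
    rw [Finset.sum_range_succ' _ (k+2), Finset.sum_range_succ' _ (k+1)] at hfull
    have hrw : ∀ t ∈ range (k+1),
        ((((t+1+1:ℕ)):ℝ) - 1) * (((k+2).choose (t+1+1) : ℝ)) * q ^ (t+1+1) * (1 - q) ^ (k+2-(t+1+1))
          = (((t:ℝ)+2) - 1) * (((k+2).choose (t+2) : ℝ)) * q ^ (t+2) * (1 - q) ^ (k+2-(t+2)) := by
      intro t _
      have e : t+1+1 = t+2 := rfl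
      rw [e]
      push_cast
      ring
    rw [Finset.sum_congr rfl hrw] at hfull
    norm_num at hfull
    linarith [hfull]
  -- rewrite each LHS term
  have term : ∀ t ∈ range (k+1),
      (k.choose t : ℝ) * q ^ t * (1 - q) ^ (k - t) / (t + 2)
        = (1 / (((k:ℝ)+1) * ((k:ℝ)+2) * q^2)) *
          ((((t:ℝ)+2) - 1) * (((k+2).choose (t+2) : ℝ)) * q ^ (t+2) * (1 - q) ^ (k+2-(t+2))) := by
    intro t _
    have hc : ((t:ℝ)+1) * ((t:ℝ)+2) * (((k+2).choose (t+2) : ℝ))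
        = ((k:ℝ)+1) * ((k:ℝ)+2) * (k.choose t : ℝ) := by
      exact_mod_cast hkey t
    have h2 : k+2-(t+2) = k - t := by omega
    rw [h2]
    have hk1 : ((k:ℝ)+1) ≠ 0 := by positivity
    have hk2 : ((k:ℝ)+2) ≠ 0 := by positivity
    have ht2 : ((t:ℝ)+2) ≠ 0 := by positivity
    field_simp
    linear_combination (-(q ^ t * q^2 * (1 - q) ^ (k - t))) * hc
  rw [Finset.sum_congr rfl term, ← Finset.mul_sum, hS]
  push_cast
  field_simp
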